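/- If x : ℝ → ℝ² is an integral curve of the gradient field ∇h of a C¹ function h, and the limit p = lim_{t→∞} x(t) exists, then p is a critical point of h, i.e., ∇h(p) = 0. -/

import Mathlib

open Real Filter

/-- If `x` is an integral curve of the gradient field `∇h` of a `C¹` function `h`
with locally Lipschitz gradient, and `p = lim_{t→∞} x(t)` exists, then `p` is a
critical point of `h`. -/
theorem stmt3 (h : EuclideanSpace ℝ (Fin 2) → ℝ) (hh : ContDiff ℝ 1 h)
    (hlip : LocallyLipschitz (fun p => gradient h p))
    (x : ℝ → EuclideanSpace ℝ (Fin 2)) (p : EuclideanSpace ℝ (Fin 2))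
    (hx : ∀ t : ℝ, 0 ≤ t → HasDerivAt x (gradient h (x t)) t)
    (hlim : Tendsto x atTop (nhds p)) :
    gradient h p = 0 := by
  by_contra hv
  set v := gradient h p with hvdef
  have hvpos : (0:ℝ) < ‖v‖^2 := by
    have := norm_pos_iff.mpr hv
    positivity
  set c : ℝ := ‖v‖^2 / 2 with hcdef
  have hcpos : 0 < c := by positivity
  have hgc : Continuous (gradient h) := hlip.continuous
  -- ⟪v, ∇h(x t)⟫ → ‖v‖²
  have h1 : Tendsto (fun t => inner ℝ v (gradient h (x t)) : ℝ → ℝ) atTop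
      (nhds (‖v‖^2)) := by
    have := Filter.Tendsto.inner (𝕜 := ℝ) (tendsto_const_nhds (x := v) (f := atTop))
      ((hgc.tendsto p).comp hlim)
    rwa [real_inner_self_eq_norm_sq] at this
  have he : ∀ᶠ t in atTop, c < inner ℝ v (gradient h (x t)) :=
    h1.eventually (eventually_gt_nhds (by simp [hcdef]; linarith))
  obtain ⟨T, hT⟩ := ((eventually_ge_atTop (0:ℝ)).and he).exists_forall_of_atTop
  have hT0 : (0:ℝ) ≤ T := (hT T le_rfl).1
  set f : ℝ → ℝ := fun t => inner ℝ v (x t) with hfdef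
  have hf' : ∀ t, 0 ≤ t → HasDerivAt f (inner ℝ v (gradient h (x t))) t := by
    intro t ht
    have := (hasDerivAt_const t v).inner ℝ (hx t ht)
    simp only [inner_zero_right, add_zero, inner_zero_left, zero_add] at this
    exact this
  set g : ℝ → ℝ := fun t => f t - c * t with hgdef
  have hg' : ∀ t, 0 ≤ t → HasDerivAt g (inner ℝ v (gradient h (x t)) - c) t := by
    intro t ht
    have := (hf' t ht).sub ((hasDerivAt_id t).const_mul c)
    rw [mul_one] at this
    exact this
  have hmono : MonotoneOn g (Set.Ici T) := by
    apply monotoneOn_of_deriv_nonneg (convex_Ici T)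
    · intro t ht
      exact (hg' t (hT0.trans ht)).continuousAt.continuousWithinAt
    · intro t ht
      rw [interior_Ici] at ht
      exact (hg' t (hT0.trans ht.le)).differentiableAt.differentiableWithinAt
    · intro t ht
      rw [interior_Ici] at ht
      rw [(hg' t (hT0.trans ht.le)).deriv]
      have := (hT t ht.le).2
      linarith
  -- f tends to atTop
  have hft : Tendsto f atTop atTop := by
    apply tendsto_atTop_mono' atTop
      (f₁ := fun t => g T + c * t)
    · filter_upwards [eventually_ge_atTop T] with t ht
      have := hmono Set.self_mem_Ici ht ht
      simp only [hgdef] at this ⊢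
      linarith
    · exact tendsto_atTop_add_const_left _ _
        (tendsto_id.const_mul_atTop hcpos)
  have hfn : Tendsto f atTop (nhds (inner ℝ v p)) :=
    Filter.Tendsto.inner (𝕜 := ℝ) (tendsto_const_nhds (x := v) (f := atTop)) hlim
  exact not_tendsto_atTop_of_tendsto_nhds hfn hft
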